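/- Let μ, ν be Borel probability measures on ℝ and k > 0. Then the Cramér distance is scale sensitive of order 1/2: d_c((k·)_*μ, (k·)_*ν) = k^{1/2} · d_c(μ, ν), where (k·)_*μ denotes the pushforward of μ under the map x ↦ k·x (the law of kU for U ∼ μ). -/

import Mathlib

open MeasureTheory ProbabilityTheory
open scoped ENNReal

/-- The energy distance (squared Cramér distance) between two measures on `ℝ`. -/
noncomputable def energyDist (μ ν : Measure ℝ) : ℝ≥0∞ :=
  ∫⁻ x, ENNReal.ofReal ((cdf μ x - cdf ν x) ^ 2)

/-- The Cramér distance between two measures on `ℝ`. -/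
noncomputable def cramerDist (μ ν : Measure ℝ) : ℝ≥0∞ :=
  energyDist μ ν ^ (1 / 2 : ℝ)

lemma cdf_map_mul (μ : Measure ℝ) [IsProbabilityMeasure μ] {k : ℝ} (hk : 0 < k) (x : ℝ) :
    cdf (Measure.map (fun y => k * y) μ) x = cdf μ (k⁻¹ * x) := by
  have : IsProbabilityMeasure (Measure.map (fun y => k * y) μ) :=
    Measure.isProbabilityMeasure_map (measurable_const_mul k).aemeasurable
  rw [cdf_eq_real, cdf_eq_real, measureReal_def, measureReal_def,
    Measure.map_apply (measurable_const_mul k) measurableSet_Iic]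
  congr 2
  ext y
  simp only [Set.mem_preimage, Set.mem_Iic]
  constructor
  · intro h
    calc y = k⁻¹ * (k * y) := by field_simp
    _ ≤ k⁻¹ * x := by gcongr
  · intro h
    calc k * y ≤ k * (k⁻¹ * x) := by gcongr
    _ = x := by field_simp

lemma energyDist_map_mul (μ ν : Measure ℝ)
    [IsProbabilityMeasure μ] [IsProbabilityMeasure ν] {k : ℝ} (hk : 0 < k) :
    energyDist (Measure.map (fun x => k * x) μ) (Measure.map (fun x => k * x) ν) =
      ENNReal.ofReal k * energyDist μ ν := by
  have hf : Measurable fun y => ENNReal.ofReal ((cdf μ y - cdf ν y) ^ 2) :=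
    ((((monotone_cdf μ).measurable).sub ((monotone_cdf ν).measurable)).pow_const 2).ennreal_ofReal
  unfold energyDist
  simp_rw [cdf_map_mul μ hk, cdf_map_mul ν hk]
  rw [show (∫⁻ x, ENNReal.ofReal ((cdf μ (k⁻¹ * x) - cdf ν (k⁻¹ * x)) ^ 2)) =
      ∫⁻ y, ENNReal.ofReal ((cdf μ y - cdf ν y) ^ 2)
        ∂(Measure.map (fun x => k⁻¹ * x) volume) from
    (lintegral_map hf (measurable_const_mul _)).symm,
    Real.map_volume_mul_left (inv_ne_zero hk.ne'), lintegral_smul_measure]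
  congr 1
  rw [inv_inv, abs_of_pos hk]

/-- Scale sensitivity of order 1/2 of the Cramér distance:
`d_c((k·)_*μ, (k·)_*ν) = √k · d_c(μ, ν)` for `k > 0`. -/
theorem cramerDist_map_smul (μ ν : Measure ℝ)
    [IsProbabilityMeasure μ] [IsProbabilityMeasure ν] (k : ℝ) (hk : 0 < k) :
    cramerDist (Measure.map (fun x => k * x) μ) (Measure.map (fun x => k * x) ν) =
      ENNReal.ofReal (Real.sqrt k) * cramerDist μ ν := by
  unfold cramerDist
  rw [energyDist_map_mul μ ν hk, ENNReal.mul_rpow_of_nonneg _ _ (by norm_num),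
    ENNReal.ofReal_rpow_of_pos hk, Real.sqrt_eq_rpow]
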